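/- With notation as in the context, given a homogeneous ideal I_X ⊆ S_X with H_{S_X/I_X} = h_{r,X}, the graded subspace J ⊆ S_{X×Y} defined by J_{(D,E)} = ℒ(E,1)·(S_X)_D + (S_Y)_E·(I_X)_D if (D,E) ∈ 𝒜, J_{(D,E)} = ℒ((D,E),r) if (D,E) ∈ ℬ, and J_{(D,E)} = 0 if (D,E) ∈ 𝒞, is an ideal of S_{X×Y}. -/

import Mathlib

open MvPolynomial

noncomputable section

/-- The variables of the Cox ring of a product of projective spaces. -/
abbrev PPVars (d : ℕ) (n : Fin d → ℕ) : Type := Σ i : Fin d, Fin (n i + 1)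

/-- The ℤ^d-grading on the Cox ring of `X = ℙ^{n_1}×⋯×ℙ^{n_d}`: `deg α_{ij} = e_i`. -/
def wPP (d : ℕ) (n : Fin d → ℕ) : PPVars d n → (Fin d → ℕ) := fun p => Pi.single p.1 1

/-- The Cox ring of `X × Y`: polynomials in the `α`-variables (left) and `β`-variables (right). -/
abbrev CoxXY (d e : ℕ) (n : Fin d → ℕ) (m : Fin e → ℕ) : Type :=
  MvPolynomial (PPVars d n ⊕ PPVars e m) ℂ

/-- The ℤ^{d+e}-grading on the Cox ring of `X × Y`. -/
def wXY (d e : ℕ) (n : Fin d → ℕ) (m : Fin e → ℕ) :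
    PPVars d n ⊕ PPVars e m → (Fin d → ℕ) × (Fin e → ℕ) :=
  Sum.elim (fun p => (Pi.single p.1 1, 0)) (fun q => (0, Pi.single q.1 1))

/-- The degree-`D` component of the Cox ring of `X`. -/
def coxPieceX (d : ℕ) (n : Fin d → ℕ) (D : Fin d → ℕ) :
    Submodule ℂ (MvPolynomial (PPVars d n) ℂ) :=
  weightedHomogeneousSubmodule ℂ (wPP d n) D

/-- The degree-`(D,E)` component of the Cox ring of `X × Y`. -/
def coxPieceXY (d e : ℕ) (n : Fin d → ℕ) (m : Fin e → ℕ)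
    (u : (Fin d → ℕ) × (Fin e → ℕ)) : Submodule ℂ (CoxXY d e n m) :=
  weightedHomogeneousSubmodule ℂ (wXY d e n m) u

/-- A homogeneous ideal of the Cox ring of `X`. -/
def IsHomogX (d : ℕ) (n : Fin d → ℕ) (I : Ideal (MvPolynomial (PPVars d n) ℂ)) : Prop :=
  Submodule.restrictScalars ℂ I =
    ⨆ D : Fin d → ℕ, (Submodule.restrictScalars ℂ I ⊓ coxPieceX d n D)

/-- A homogeneous ideal of the Cox ring of `X × Y`. -/
def IsHomogXY (d e : ℕ) (n : Fin d → ℕ) (m : Fin e → ℕ) (K : Ideal (CoxXY d e n m)) : Prop :=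
  Submodule.restrictScalars ℂ K =
    ⨆ u : (Fin d → ℕ) × (Fin e → ℕ), (Submodule.restrictScalars ℂ K ⊓ coxPieceXY d e n m u)

/-- The Hilbert function of `S_X/I`. -/
def HFX (d : ℕ) (n : Fin d → ℕ) (I : Ideal (MvPolynomial (PPVars d n) ℂ))
    (D : Fin d → ℕ) : ℕ :=
  Module.finrank ℂ ↥(coxPieceX d n D) -
    Module.finrank ℂ ↥(Submodule.restrictScalars ℂ I ⊓ coxPieceX d n D)

/-- The Hilbert function of `S_{X×Y}/K`. -/
def HFXY (d e : ℕ) (n : Fin d → ℕ) (m : Fin e → ℕ) (K : Ideal (CoxXY d e n m))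
    (u : (Fin d → ℕ) × (Fin e → ℕ)) : ℕ :=
  Module.finrank ℂ ↥(coxPieceXY d e n m u) -
    Module.finrank ℂ ↥(Submodule.restrictScalars ℂ K ⊓ coxPieceXY d e n m u)

/-- The `X`-part of an exponent vector of the Cox ring of `X × Y`. -/
def xPart {A B : Type*} (v : A ⊕ B →₀ ℕ) : A →₀ ℕ :=
  (Finsupp.sumFinsuppEquivProdFinsupp v).1

/-- The `Y`-part of an exponent vector of the Cox ring of `X × Y`. -/
def yPart {A B : Type*} (v : A ⊕ B →₀ ℕ) : B →₀ ℕ :=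
  (Finsupp.sumFinsuppEquivProdFinsupp v).2

/-- The product monomial order on `S_{X×Y}`:
`α^u β^v > α^{u'} β^{v'}` iff `β^v > β^{v'}`, or `β^v = β^{v'}` and `α^u > α^{u'}`. -/
def prodLt {A B : Type*} (lX : LinearOrder (A →₀ ℕ)) (lY : LinearOrder (B →₀ ℕ))
    (u v : A ⊕ B →₀ ℕ) : Prop :=
  lY.lt (yPart u) (yPart v) ∨ (yPart u = yPart v ∧ lX.lt (xPart u) (xPart v))

/-- The number of monomials of the same degree as `v` that are smaller than `v`. -/
def smallerCount (d e : ℕ) (n : Fin d → ℕ) (m : Fin e → ℕ)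
    (lX : LinearOrder (PPVars d n →₀ ℕ)) (lY : LinearOrder (PPVars e m →₀ ℕ))
    (v : PPVars d n ⊕ PPVars e m →₀ ℕ) : ℕ :=
  Set.ncard {v' : PPVars d n ⊕ PPVars e m →₀ ℕ |
    Finsupp.weight (wXY d e n m) v' = Finsupp.weight (wXY d e n m) v ∧ prodLt lX lY v' v}

/-- `ℒ(u,s)`: the span of all degree-`u` monomials of `S_{X×Y}` except the `s` smallest ones,
i.e. of those degree-`u` monomials having at least `s` smaller monomials of the same degree. -/
def LL (d e : ℕ) (n : Fin d → ℕ) (m : Fin e → ℕ)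
    (lX : LinearOrder (PPVars d n →₀ ℕ)) (lY : LinearOrder (PPVars e m →₀ ℕ))
    (u : (Fin d → ℕ) × (Fin e → ℕ)) (s : ℕ) : Submodule ℂ (CoxXY d e n m) :=
  Submodule.span ℂ {p : CoxXY d e n m | ∃ v : PPVars d n ⊕ PPVars e m →₀ ℕ,
    Finsupp.weight (wXY d e n m) v = u ∧ s ≤ smallerCount d e n m lX lY v ∧
    p = monomial v 1}

/-- The image in `S_{X×Y}` of the graded piece `(I_X)_D ⊆ S_X`. -/
def IXemb (d e : ℕ) (n : Fin d → ℕ) (m : Fin e → ℕ)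
    (IX : Ideal (MvPolynomial (PPVars d n) ℂ)) (D : Fin d → ℕ) :
    Submodule ℂ (CoxXY d e n m) :=
  Submodule.map (MvPolynomial.rename
      (Sum.inl : PPVars d n → PPVars d n ⊕ PPVars e m)).toLinearMap
    (Submodule.restrictScalars ℂ IX ⊓ coxPieceX d n D)

/-- The degree-`(D,E)` piece of the graded subspace `J`:
`ℒ(E,1)·(S_X)_D + (S_Y)_E·(I_X)_D` if `(D,E) ∈ 𝒜` (i.e. `dim (S_X)_D ≥ r`),
`ℒ((D,E),r)` if `(D,E) ∈ ℬ` (i.e. `dim (S_X)_D < r ≤ dim (S_{X×Y})_{(D,E)}`), and `0` if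
`(D,E) ∈ 𝒞` (i.e. `dim (S_{X×Y})_{(D,E)} < r`). -/
def Jpiece (r d e : ℕ) (n : Fin d → ℕ) (m : Fin e → ℕ)
    (lX : LinearOrder (PPVars d n →₀ ℕ)) (lY : LinearOrder (PPVars e m →₀ ℕ))
    (IX : Ideal (MvPolynomial (PPVars d n) ℂ))
    (u : (Fin d → ℕ) × (Fin e → ℕ)) : Submodule ℂ (CoxXY d e n m) :=
  if r ≤ Module.finrank ℂ ↥(coxPieceX d n u.1) then
    LL d e n m lX lY (0, u.2) 1 * coxPieceXY d e n m (u.1, 0) ⊔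
      coxPieceXY d e n m (0, u.2) * IXemb d e n m IX u.1
  else if r ≤ Module.finrank ℂ ↥(coxPieceXY d e n m u) then LL d e n m lX lY u r
  else ⊥
namespace Lemma31

open Finsupp

/-! ### Parts of exponent vectors -/

section Parts

variable {A B : Type*}

lemma xPart_apply (v : A ⊕ B →₀ ℕ) (a : A) : xPart v a = v (Sum.inl a) :=
  Finsupp.fst_sumFinsuppEquivProdFinsupp v a

lemma yPart_apply (v : A ⊕ B →₀ ℕ) (b : B) : yPart v b = v (Sum.inr b) :=
  Finsupp.snd_sumFinsuppEquivProdFinsupp v b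

lemma xPart_add (u v : A ⊕ B →₀ ℕ) : xPart (u + v) = xPart u + xPart v := by
  ext a; simp [xPart_apply]

lemma yPart_add (u v : A ⊕ B →₀ ℕ) : yPart (u + v) = yPart u + yPart v := by
  ext b; simp [yPart_apply]

@[simp] lemma xPart_zero : xPart (0 : A ⊕ B →₀ ℕ) = 0 := by
  ext a; simp [xPart_apply]

@[simp] lemma yPart_zero : yPart (0 : A ⊕ B →₀ ℕ) = 0 := by
  ext b; simp [yPart_apply]

/-- Embedding of the left factor. -/
def eL (x : A →₀ ℕ) : A ⊕ B →₀ ℕ := Finsupp.sumFinsuppEquivProdFinsupp.symm (x, 0)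

/-- Embedding of the right factor. -/
def eR (y : B →₀ ℕ) : A ⊕ B →₀ ℕ := Finsupp.sumFinsuppEquivProdFinsupp.symm (0, y)

@[simp] lemma eL_inl (x : A →₀ ℕ) (a : A) : (eL x : A ⊕ B →₀ ℕ) (Sum.inl a) = x a :=
  Finsupp.sumFinsuppEquivProdFinsupp_symm_inl _ a

@[simp] lemma eL_inr (x : A →₀ ℕ) (b : B) : (eL x : A ⊕ B →₀ ℕ) (Sum.inr b) = 0 :=
  Finsupp.sumFinsuppEquivProdFinsupp_symm_inr _ b

@[simp] lemma eR_inl (y : B →₀ ℕ) (a : A) : (eR y : A ⊕ B →₀ ℕ) (Sum.inl a) = 0 :=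
  Finsupp.sumFinsuppEquivProdFinsupp_symm_inl _ a

@[simp] lemma eR_inr (y : B →₀ ℕ) (b : B) : (eR y : A ⊕ B →₀ ℕ) (Sum.inr b) = y b :=
  Finsupp.sumFinsuppEquivProdFinsupp_symm_inr _ b

@[simp] lemma xPart_eL (x : A →₀ ℕ) : xPart (eL x : A ⊕ B →₀ ℕ) = x := by
  ext a; simp [xPart_apply]

@[simp] lemma yPart_eL (x : A →₀ ℕ) : yPart (eL x : A ⊕ B →₀ ℕ) = 0 := by
  ext b; simp [yPart_apply]

@[simp] lemma xPart_eR (y : B →₀ ℕ) : xPart (eR y : A ⊕ B →₀ ℕ) = 0 := by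
  ext a; simp [xPart_apply]

@[simp] lemma yPart_eR (y : B →₀ ℕ) : yPart (eR y : A ⊕ B →₀ ℕ) = y := by
  ext b; simp [yPart_apply]

lemma decomp (v : A ⊕ B →₀ ℕ) : v = eL (xPart v) + eR (yPart v) := by
  ext ab
  cases ab with
  | inl a => simp [xPart_apply]
  | inr b => simp [yPart_apply]

lemma parts_ext {v1 v2 : A ⊕ B →₀ ℕ} (hx : xPart v1 = xPart v2) (hy : yPart v1 = yPart v2) :
    v1 = v2 := by
  rw [decomp v1, decomp v2, hx, hy]

lemma weight_single_one {σ' M : Type*} [AddCommMonoid M] (w : σ' → M) (s : σ') :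
    Finsupp.weight w (Finsupp.single s 1) = w s := by
  rw [Finsupp.weight_apply, Finsupp.sum_single_index] <;> simp

lemma weight_single_nat {σ' M : Type*} [AddCommMonoid M] (w : σ' → M) (s : σ') (k : ℕ) :
    Finsupp.weight w (Finsupp.single s k) = k • w s := by
  rw [Finsupp.weight_apply, Finsupp.sum_single_index]; simp

variable {M1 M2 : Type*} [AddCommMonoid M1] [AddCommMonoid M2]

lemma weight_split (wA : A → M1) (wB : B → M2) (v : A ⊕ B →₀ ℕ) :
    Finsupp.weight (Sum.elim (fun a => ((wA a, 0) : M1 × M2)) fun b => ((0, wB b) : M1 × M2)) v =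
      (Finsupp.weight wA (xPart v), Finsupp.weight wB (yPart v)) := by
  induction v using Finsupp.induction_linear with
  | zero => simp; rfl
  | add f g hf hg =>
      rw [map_add, hf, hg, xPart_add, yPart_add, map_add, map_add, Prod.mk_add_mk]
  | single a k =>
      cases a with
      | inl a =>
          have hx : xPart (Finsupp.single (Sum.inl a) k : A ⊕ B →₀ ℕ) = Finsupp.single a k := by
            ext a'; rw [xPart_apply]; exact Finsupp.single_apply_left Sum.inl_injective _ _ _
          have hy : yPart (Finsupp.single (Sum.inl a) k : A ⊕ B →₀ ℕ) = 0 := by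
            ext b'; simp [yPart_apply, Finsupp.single_apply, Sum.inr.injEq]
          rw [hx, hy, weight_single_nat, weight_single_nat, map_zero]
          simp [Prod.smul_mk]
      | inr b =>
          have hx : xPart (Finsupp.single (Sum.inr b) k : A ⊕ B →₀ ℕ) = 0 := by
            ext a'; simp [xPart_apply, Finsupp.single_apply, Sum.inl.injEq]
          have hy : yPart (Finsupp.single (Sum.inr b) k : A ⊕ B →₀ ℕ) = Finsupp.single b k := by
            ext b'; rw [yPart_apply]; exact Finsupp.single_apply_left Sum.inr_injective _ _ _
          rw [hx, hy, weight_single_nat, weight_single_nat, map_zero]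
          simp [Prod.smul_mk]

end Parts

lemma wXY_weight_split (d e : ℕ) (n : Fin d → ℕ) (m : Fin e → ℕ)
    (v : PPVars d n ⊕ PPVars e m →₀ ℕ) :
    Finsupp.weight (wXY d e n m) v =
      (Finsupp.weight (wPP d n) (xPart v), Finsupp.weight (wPP e m) (yPart v)) := by
  rw [show wXY d e n m = Sum.elim (fun a => ((wPP d n a, 0) : (Fin d → ℕ) × (Fin e → ℕ)))
    (fun b => ((0, wPP e m b) : (Fin d → ℕ) × (Fin e → ℕ))) from rfl]
  exact weight_split _ _ v

/-! ### Finiteness of the set of monomials of fixed degree -/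

lemma finite_fiber {σ' M : Type*} [Finite σ'] [AddCommMonoid M] (w : σ' → M) (N : M →+ ℕ)
    (hN : ∀ a, N (w a) ≠ 0) (u : M) :
    {v : σ' →₀ ℕ | Finsupp.weight w v = u}.Finite := by
  refine Set.Finite.subset (Finsupp.finite_of_nat_weight_le (fun a => N (w a)) hN (N u)) ?_
  intro v hv
  simp only [Set.mem_setOf_eq] at hv ⊢
  have hcomp : Finsupp.weight (fun a => N (w a)) v = N (Finsupp.weight w v) := by
    rw [Finsupp.weight_apply, Finsupp.weight_apply, Finsupp.sum, Finsupp.sum, map_sum]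
    exact Finset.sum_congr rfl fun a _ => (AddMonoidHom.map_nsmul N _ _).symm
  rw [hcomp, hv]

/-- Sum of the components, as an additive monoid hom. -/
def sumHom (k : ℕ) : (Fin k → ℕ) →+ ℕ where
  toFun D := ∑ i, D i
  map_zero' := by simp
  map_add' a b := by simp [Finset.sum_add_distrib]

/-- Sum of all components of a pair, as an additive monoid hom. -/
def sumHom2 (k l : ℕ) : ((Fin k → ℕ) × (Fin l → ℕ)) →+ ℕ where
  toFun u := (∑ i, u.1 i) + ∑ j, u.2 j
  map_zero' := by simp
  map_add' a b := by
    simp only [Prod.fst_add, Pi.add_apply, Prod.snd_add, Finset.sum_add_distrib]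
    ring

lemma fiberX_finite (d : ℕ) (n : Fin d → ℕ) (D : Fin d → ℕ) :
    {a : PPVars d n →₀ ℕ | Finsupp.weight (wPP d n) a = D}.Finite := by
  refine finite_fiber _ (sumHom d) (fun a => ?_) D
  simp [sumHom, wPP, Finset.sum_pi_single']

lemma fiberXY_finite (d e : ℕ) (n : Fin d → ℕ) (m : Fin e → ℕ)
    (u : (Fin d → ℕ) × (Fin e → ℕ)) :
    {v : PPVars d n ⊕ PPVars e m →₀ ℕ | Finsupp.weight (wXY d e n m) v = u}.Finite := by
  refine finite_fiber _ (sumHom2 d e) (fun a => ?_) u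
  rcases a with p | q <;> simp [sumHom2, wXY, Finset.sum_pi_single']

/-! ### Dimension of graded pieces -/

lemma finrank_weightedHomogeneous {σ' M : Type*} [AddCommMonoid M]
    (w : σ' → M) (u : M) (h : {v : σ' →₀ ℕ | Finsupp.weight w v = u}.Finite) :
    Module.finrank ℂ ↥(weightedHomogeneousSubmodule ℂ w u) =
      {v : σ' →₀ ℕ | Finsupp.weight w v = u}.ncard := by
  classical
  haveI : Fintype {v : σ' →₀ ℕ | Finsupp.weight w v = u} := h.fintype
  have hspan : weightedHomogeneousSubmodule ℂ w u =
      Submodule.span ℂ (Set.range fun v : {v : σ' →₀ ℕ | Finsupp.weight w v = u} =>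
        (monomial (v : σ' →₀ ℕ) (1 : ℂ) : MvPolynomial σ' ℂ)) := by
    apply le_antisymm
    · intro p hp
      have hp' := (mem_weightedHomogeneousSubmodule _ _ _ _).mp hp
      rw [p.as_sum]
      refine Submodule.sum_mem _ fun v hv => ?_
      have hvw : Finsupp.weight w v = u := hp' (MvPolynomial.mem_support_iff.mp hv)
      have hmon : (monomial v) (MvPolynomial.coeff v p) =
          (MvPolynomial.coeff v p) • (monomial v (1 : ℂ)) := by
        rw [MvPolynomial.smul_monomial, smul_eq_mul, mul_one]
      rw [hmon]
      exact Submodule.smul_mem _ _ (Submodule.subset_span ⟨⟨v, hvw⟩, rfl⟩)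
    · rw [Submodule.span_le]
      rintro _ ⟨v, rfl⟩
      exact isWeightedHomogeneous_monomial w _ _ v.2
  have hli : LinearIndependent ℂ (fun v : {v : σ' →₀ ℕ | Finsupp.weight w v = u} =>
      (monomial (v : σ' →₀ ℕ) (1 : ℂ) : MvPolynomial σ' ℂ)) := by
    have := (MvPolynomial.basisMonomials σ' ℂ).linearIndependent.comp
      (Subtype.val : {v : σ' →₀ ℕ | Finsupp.weight w v = u} → σ' →₀ ℕ) Subtype.val_injective
    exact this
  rw [hspan, finrank_span_eq_card hli, ← Nat.card_coe_set_eq, Nat.card_eq_fintype_card]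

lemma finrank_coxPieceX (d : ℕ) (n : Fin d → ℕ) (D : Fin d → ℕ) :
    Module.finrank ℂ ↥(coxPieceX d n D) =
      {a : PPVars d n →₀ ℕ | Finsupp.weight (wPP d n) a = D}.ncard :=
  finrank_weightedHomogeneous _ _ (fiberX_finite d n D)

lemma finrank_coxPieceXY (d e : ℕ) (n : Fin d → ℕ) (m : Fin e → ℕ)
    (u : (Fin d → ℕ) × (Fin e → ℕ)) :
    Module.finrank ℂ ↥(coxPieceXY d e n m u) =
      {v : PPVars d n ⊕ PPVars e m →₀ ℕ | Finsupp.weight (wXY d e n m) v = u}.ncard :=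
  finrank_weightedHomogeneous _ _ (fiberXY_finite d e n m u)

lemma ncard_fiber_mono {σ' M : Type*} [AddCommMonoid M] (w : σ' → M) (u : M) (s : σ')
    (hfin : {v : σ' →₀ ℕ | Finsupp.weight w v = u + w s}.Finite) :
    {v : σ' →₀ ℕ | Finsupp.weight w v = u}.ncard ≤
      {v : σ' →₀ ℕ | Finsupp.weight w v = u + w s}.ncard := by
  refine Set.ncard_le_ncard_of_injOn (fun v => v + Finsupp.single s 1) ?_ ?_ hfin
  · intro v hv
    simp only [Set.mem_setOf_eq] at hv ⊢
    rw [map_add, hv, weight_single_one]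
  · exact fun a _ b _ h => add_left_injective _ h

/-! ### Smaller-count and `LL` lemmas -/

section Count

variable (d e : ℕ) (n : Fin d → ℕ) (m : Fin e → ℕ)
  (lX : LinearOrder (PPVars d n →₀ ℕ)) (lY : LinearOrder (PPVars e m →₀ ℕ))

lemma smallerCount_le_add
    (hlX : ∀ u v w : PPVars d n →₀ ℕ, lX.lt u v → lX.lt (u + w) (v + w))
    (hlY : ∀ u v w : PPVars e m →₀ ℕ, lY.lt u v → lY.lt (u + w) (v + w))
    (v w0 : PPVars d n ⊕ PPVars e m →₀ ℕ) :
    smallerCount d e n m lX lY v ≤ smallerCount d e n m lX lY (v + w0) := by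
  unfold smallerCount
  refine Set.ncard_le_ncard_of_injOn (fun v' => v' + w0) ?_ ?_ ?_
  · intro v' hv'
    simp only [Set.mem_setOf_eq] at hv' ⊢
    obtain ⟨h1, h2⟩ := hv'
    refine ⟨by rw [map_add, map_add, h1], ?_⟩
    rcases h2 with h | ⟨hEq, hlt⟩
    · exact Or.inl (by rw [yPart_add, yPart_add]; exact hlY _ _ _ h)
    · exact Or.inr ⟨by rw [yPart_add, yPart_add, hEq],
        by rw [xPart_add, xPart_add]; exact hlX _ _ _ hlt⟩
  · exact fun a _ b _ h => add_left_injective _ h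
  · exact (fiberXY_finite d e n m _).subset fun v' hv' => hv'.1

lemma mem_LL {c : (Fin d → ℕ) × (Fin e → ℕ)} {k : ℕ} {v : PPVars d n ⊕ PPVars e m →₀ ℕ}
    (hw : Finsupp.weight (wXY d e n m) v = c) (hc : k ≤ smallerCount d e n m lX lY v) :
    (monomial v (1 : ℂ) : CoxXY d e n m) ∈ LL d e n m lX lY c k :=
  Submodule.subset_span ⟨v, hw, hc, rfl⟩

lemma X_mul_monomial' (s : PPVars d n ⊕ PPVars e m) (v : PPVars d n ⊕ PPVars e m →₀ ℕ) :
    (X s : CoxXY d e n m) * monomial v 1 = monomial (v + Finsupp.single s 1) 1 := by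
  rw [show (X s : CoxXY d e n m) = monomial (Finsupp.single s 1) 1 from rfl,
    MvPolynomial.monomial_mul, one_mul, add_comm]

lemma LL_mul_le {c : (Fin d → ℕ) × (Fin e → ℕ)} {k : ℕ} (s : PPVars d n ⊕ PPVars e m)
    (P : Submodule ℂ (CoxXY d e n m))
    (h : ∀ v : PPVars d n ⊕ PPVars e m →₀ ℕ, Finsupp.weight (wXY d e n m) v = c →
      k ≤ smallerCount d e n m lX lY v → (X s : CoxXY d e n m) * monomial v 1 ∈ P) :
    ∀ x ∈ LL d e n m lX lY c k, (X s : CoxXY d e n m) * x ∈ P := by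
  intro x hx
  have hmap : Submodule.map (LinearMap.mulLeft ℂ (X s : CoxXY d e n m))
      (LL d e n m lX lY c k) ≤ P := by
    unfold LL
    rw [Submodule.map_span]
    refine Submodule.span_le.mpr ?_
    rintro _ ⟨_, ⟨v, hw, hc, rfl⟩, rfl⟩
    simpa using h v hw hc
  exact hmap ⟨x, hx, rfl⟩

lemma mulLL
    (hlX : ∀ u v w : PPVars d n →₀ ℕ, lX.lt u v → lX.lt (u + w) (v + w))
    (hlY : ∀ u v w : PPVars e m →₀ ℕ, lY.lt u v → lY.lt (u + w) (v + w))
    (s : PPVars d n ⊕ PPVars e m) (c : (Fin d → ℕ) × (Fin e → ℕ)) (k : ℕ) :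
    ∀ x ∈ LL d e n m lX lY c k,
      (X s : CoxXY d e n m) * x ∈ LL d e n m lX lY (c + wXY d e n m s) k := by
  refine LL_mul_le d e n m lX lY s _ fun v hw hc => ?_
  rw [X_mul_monomial']
  refine mem_LL d e n m lX lY ?_ ?_
  · rw [map_add, hw, weight_single_one]
  · exact le_trans hc (smallerCount_le_add d e n m lX lY hlX hlY v _)

end Count

/-! ### Multiplication by a variable on the building blocks -/

section Blocks

variable (d e : ℕ) (n : Fin d → ℕ) (m : Fin e → ℕ)

lemma mem_coxPieceXY {c : (Fin d → ℕ) × (Fin e → ℕ)} {q : CoxXY d e n m} :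
    q ∈ coxPieceXY d e n m c ↔ MvPolynomial.IsWeightedHomogeneous (wXY d e n m) q c :=
  mem_weightedHomogeneousSubmodule _ _ _ _

lemma mulX_piece (s : PPVars d n ⊕ PPVars e m) (c : (Fin d → ℕ) × (Fin e → ℕ))
    {q : CoxXY d e n m} (hq : q ∈ coxPieceXY d e n m c) :
    (X s : CoxXY d e n m) * q ∈ coxPieceXY d e n m (c + wXY d e n m s) := by
  rw [mem_coxPieceXY] at hq ⊢
  have h := (isWeightedHomogeneous_X ℂ (wXY d e n m) s).mul hq
  rwa [add_comm] at h

lemma mulIXemb (IX : Ideal (MvPolynomial (PPVars d n) ℂ)) (t : PPVars d n) (D : Fin d → ℕ)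
    {q : CoxXY d e n m} (hq : q ∈ IXemb d e n m IX D) :
    (X (Sum.inl t) : CoxXY d e n m) * q ∈ IXemb d e n m IX (D + Pi.single t.1 1) := by
  obtain ⟨p, ⟨hpI, hpD⟩, rfl⟩ := hq
  refine ⟨X t * p, ⟨?_, ?_⟩, ?_⟩
  · exact Ideal.mul_mem_left _ _ hpI
  · have hp' : MvPolynomial.IsWeightedHomogeneous (wPP d n) p D :=
      (mem_weightedHomogeneousSubmodule _ _ _ _).mp hpD
    have h := (isWeightedHomogeneous_X ℂ (wPP d n) t).mul hp'
    have h2 : wPP d n t + D = D + Pi.single t.1 1 := by rw [add_comm]; rfl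
    exact (mem_weightedHomogeneousSubmodule _ _ _ _).mpr (h2 ▸ h)
  · simp only [AlgHom.toLinearMap_apply, map_mul, rename_X]

lemma mul_absorb_right {S : Type*} [CommSemiring S] [Algebra ℂ S] {a : S}
    {A B C D : Submodule ℂ S} (hAC : A ≤ C) (hBD : ∀ b ∈ B, a * b ∈ D)
    {x : S} (hx : x ∈ A * B) : a * x ∈ C * D := by
  refine Submodule.mul_induction_on hx (fun p hp q hq => ?_) fun p q hp hq => ?_
  · rw [mul_left_comm]
    exact Submodule.mul_mem_mul (hAC hp) (hBD q hq)
  · rw [mul_add]; exact add_mem hp hq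

lemma mul_absorb_left {S : Type*} [CommSemiring S] [Algebra ℂ S] {a : S}
    {A B C D : Submodule ℂ S} (hAC : ∀ p ∈ A, a * p ∈ C) (hBD : B ≤ D)
    {x : S} (hx : x ∈ A * B) : a * x ∈ C * D := by
  refine Submodule.mul_induction_on hx (fun p hp q hq => ?_) fun p q hp hq => ?_
  · rw [← mul_assoc]
    exact Submodule.mul_mem_mul (hAC p hp) (hBD hq)
  · rw [mul_add]; exact add_mem hp hq

end Blocks

/-! ### The three regimes of `Jpiece` -/

section JpieceEq

variable (r d e : ℕ) (n : Fin d → ℕ) (m : Fin e → ℕ)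
  (lX : LinearOrder (PPVars d n →₀ ℕ)) (lY : LinearOrder (PPVars e m →₀ ℕ))
  (IX : Ideal (MvPolynomial (PPVars d n) ℂ)) (u : (Fin d → ℕ) × (Fin e → ℕ))

lemma Jpiece_A (h : r ≤ Module.finrank ℂ ↥(coxPieceX d n u.1)) :
    Jpiece r d e n m lX lY IX u =
      LL d e n m lX lY (0, u.2) 1 * coxPieceXY d e n m (u.1, 0) ⊔
        coxPieceXY d e n m (0, u.2) * IXemb d e n m IX u.1 := by
  unfold Jpiece; rw [if_pos h]

lemma Jpiece_B (h1 : ¬ r ≤ Module.finrank ℂ ↥(coxPieceX d n u.1))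
    (h2 : r ≤ Module.finrank ℂ ↥(coxPieceXY d e n m u)) :
    Jpiece r d e n m lX lY IX u = LL d e n m lX lY u r := by
  unfold Jpiece; rw [if_neg h1, if_pos h2]

lemma Jpiece_C (h1 : ¬ r ≤ Module.finrank ℂ ↥(coxPieceX d n u.1))
    (h2 : ¬ r ≤ Module.finrank ℂ ↥(coxPieceXY d e n m u)) :
    Jpiece r d e n m lX lY IX u = ⊥ := by
  unfold Jpiece; rw [if_neg h1, if_neg h2]

end JpieceEq

/-! ### Existence of a smaller monomial in the `Y`-part -/

lemma exists_smaller_y (r d e : ℕ) (n : Fin d → ℕ) (m : Fin e → ℕ)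
    (lX : LinearOrder (PPVars d n →₀ ℕ)) (lY : LinearOrder (PPVars e m →₀ ℕ))
    (hr : 1 ≤ r) {v : PPVars d n ⊕ PPVars e m →₀ ℕ}
    (hcnt : r ≤ smallerCount d e n m lX lY v)
    (hFX : {a : PPVars d n →₀ ℕ |
      Finsupp.weight (wPP d n) a = Finsupp.weight (wPP d n) (xPart v)}.ncard < r) :
    ∃ b' : PPVars e m →₀ ℕ, lY.lt b' (yPart v) ∧
      Finsupp.weight (wPP e m) b' = Finsupp.weight (wPP e m) (yPart v) := by
  by_contra hcon
  push_neg at hcon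
  unfold smallerCount at hcnt
  set T := {a : PPVars d n →₀ ℕ |
    Finsupp.weight (wPP d n) a = Finsupp.weight (wPP d n) (xPart v)} with hT
  have hTfin : T.Finite := fiberX_finite d n _
  set S := {v' : PPVars d n ⊕ PPVars e m →₀ ℕ |
    Finsupp.weight (wXY d e n m) v' = Finsupp.weight (wXY d e n m) v ∧ prodLt lX lY v' v} with hS
  have hyeq : ∀ v' ∈ S, yPart v' = yPart v ∧ lX.lt (xPart v') (xPart v) := by
    rintro v' ⟨hw', hlt⟩
    rcases hlt with h | h
    · exfalso
      refine hcon (yPart v') h ?_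
      rw [wXY_weight_split, wXY_weight_split, Prod.mk.injEq] at hw'
      exact hw'.2
    · exact h
  have hmemT : xPart v ∈ T := rfl
  have hSle : S.ncard ≤ (T \ {xPart v}).ncard := by
    refine Set.ncard_le_ncard_of_injOn xPart ?_ ?_ hTfin.diff
    · intro v' hv'
      obtain ⟨hy, hx⟩ := hyeq v' hv'
      have hw' := hv'.1
      rw [wXY_weight_split, wXY_weight_split, Prod.mk.injEq] at hw'
      refine ⟨hw'.1, ?_⟩
      intro hmem
      rw [Set.mem_singleton_iff] at hmem
      rw [hmem] at hx
      exact @lt_irrefl _ lX.toPartialOrder.toPreorder _ hx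
    · intro v1 h1 v2 h2 hxx
      exact parts_ext hxx ((hyeq v1 h1).1.trans (hyeq v2 h2).1.symm)
  have h4 : (T \ {xPart v}).ncard = T.ncard - 1 :=
    Set.ncard_diff_singleton_of_mem hmemT
  rw [h4] at hSle
  omega

/-! ### The key lemma: multiplication by a variable maps `Jpiece u` into `Jpiece (u + deg)` -/

lemma pieceMul (r d e : ℕ) (n : Fin d → ℕ) (m : Fin e → ℕ)
    (lX : LinearOrder (PPVars d n →₀ ℕ)) (lY : LinearOrder (PPVars e m →₀ ℕ))
    (hr : 1 ≤ r)
    (hlX : ∀ u v w : PPVars d n →₀ ℕ, lX.lt u v → lX.lt (u + w) (v + w))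
    (hlY : ∀ u v w : PPVars e m →₀ ℕ, lY.lt u v → lY.lt (u + w) (v + w))
    (IX : Ideal (MvPolynomial (PPVars d n) ℂ))
    (s : PPVars d n ⊕ PPVars e m) (u : (Fin d → ℕ) × (Fin e → ℕ))
    {x : CoxXY d e n m} (hx : x ∈ Jpiece r d e n m lX lY IX u) :
    (X s : CoxXY d e n m) * x ∈ Jpiece r d e n m lX lY IX (u + wXY d e n m s) := by
  by_cases hA : r ≤ Module.finrank ℂ ↥(coxPieceX d n u.1)
  · -- case 𝒜
    rw [Jpiece_A r d e n m lX lY IX u hA] at hx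
    rcases Submodule.mem_sup.mp hx with ⟨a, ha, b, hb, rfl⟩
    rw [mul_add]
    cases s with
    | inl t =>
      have hu1 : (u + wXY d e n m (Sum.inl t)).1 = u.1 + Pi.single t.1 1 := by
        simp [wXY]
      have hu2 : (u + wXY d e n m (Sum.inl t)).2 = u.2 := by simp [wXY]
      have hA' : r ≤ Module.finrank ℂ ↥(coxPieceX d n (u + wXY d e n m (Sum.inl t)).1) := by
        rw [hu1]
        refine le_trans hA ?_
        rw [finrank_coxPieceX, finrank_coxPieceX]
        exact ncard_fiber_mono (wPP d n) u.1 t (fiberX_finite d n _)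
      rw [Jpiece_A r d e n m lX lY IX _ hA', hu1, hu2]
      refine add_mem (Submodule.mem_sup_left ?_) (Submodule.mem_sup_right ?_)
      · refine mul_absorb_right le_rfl (fun q hq => ?_) ha
        have h := mulX_piece d e n m (Sum.inl t) (u.1, 0) hq
        rwa [show ((u.1, (0 : Fin e → ℕ)) + wXY d e n m (Sum.inl t))
          = (u.1 + Pi.single t.1 1, (0 : Fin e → ℕ)) by simp [wXY, Prod.ext_iff]] at h
      · exact mul_absorb_right le_rfl (fun q hq => mulIXemb d e n m IX t u.1 hq) hb
    | inr t =>
      have hu1 : (u + wXY d e n m (Sum.inr t)).1 = u.1 := by simp [wXY]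
      have hu2 : (u + wXY d e n m (Sum.inr t)).2 = u.2 + Pi.single t.1 1 := by simp [wXY]
      have hA' : r ≤ Module.finrank ℂ ↥(coxPieceX d n (u + wXY d e n m (Sum.inr t)).1) := by
        rw [hu1]; exact hA
      rw [Jpiece_A r d e n m lX lY IX _ hA', hu1, hu2]
      refine add_mem (Submodule.mem_sup_left ?_) (Submodule.mem_sup_right ?_)
      · refine mul_absorb_left (fun p hp => ?_) le_rfl ha
        have h := mulLL d e n m lX lY hlX hlY (Sum.inr t) (0, u.2) 1 p hp
        rwa [show (((0 : Fin d → ℕ), u.2) + wXY d e n m (Sum.inr t))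
          = ((0 : Fin d → ℕ), u.2 + Pi.single t.1 1) by simp [wXY, Prod.ext_iff]] at h
      · refine mul_absorb_left (fun p hp => ?_) le_rfl hb
        have h := mulX_piece d e n m (Sum.inr t) (0, u.2) hp
        rwa [show (((0 : Fin d → ℕ), u.2) + wXY d e n m (Sum.inr t))
          = ((0 : Fin d → ℕ), u.2 + Pi.single t.1 1) by simp [wXY, Prod.ext_iff]] at h
  · by_cases hB : r ≤ Module.finrank ℂ ↥(coxPieceXY d e n m u)
    · -- case ℬ
      rw [Jpiece_B r d e n m lX lY IX u hA hB] at hx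
      have hB' : r ≤ Module.finrank ℂ ↥(coxPieceXY d e n m (u + wXY d e n m s)) := by
        refine le_trans hB ?_
        rw [finrank_coxPieceXY, finrank_coxPieceXY]
        exact ncard_fiber_mono (wXY d e n m) u s (fiberXY_finite d e n m _)
      by_cases hA' : r ≤ Module.finrank ℂ ↥(coxPieceX d n (u + wXY d e n m s).1)
      · -- target 𝒜
        rw [Jpiece_A r d e n m lX lY IX _ hA']
        refine LL_mul_le d e n m lX lY s _ (fun v hw hcnt => ?_) x hx
        rw [X_mul_monomial']
        set v' := v + Finsupp.single s 1 with hv'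
        have hwv' : Finsupp.weight (wXY d e n m) v' = u + wXY d e n m s := by
          rw [hv', map_add, hw, weight_single_one]
        have hsplit := wXY_weight_split d e n m v'
        rw [hwv'] at hsplit
        have hxw : Finsupp.weight (wPP d n) (xPart v') = (u + wXY d e n m s).1 :=
          (congrArg Prod.fst hsplit).symm
        have hyw : Finsupp.weight (wPP e m) (yPart v') = (u + wXY d e n m s).2 :=
          (congrArg Prod.snd hsplit).symm
        have hmonsplit : (monomial v' (1 : ℂ) : CoxXY d e n m)
            = monomial (eR (yPart v')) 1 * monomial (eL (xPart v')) 1 := by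
          rw [MvPolynomial.monomial_mul, one_mul]
          exact congrArg (fun z => (monomial z (1 : ℂ) : CoxXY d e n m))
            ((decomp v').trans (add_comm _ _))
        refine Submodule.mem_sup_left ?_
        rw [hmonsplit]
        refine Submodule.mul_mem_mul ?_ ?_
        · refine mem_LL d e n m lX lY ?_ ?_
          · rw [wXY_weight_split, xPart_eR, yPart_eR, map_zero, hyw]
          · have hFX' : {a : PPVars d n →₀ ℕ | Finsupp.weight (wPP d n) a
                = Finsupp.weight (wPP d n) (xPart v)}.ncard < r := by
              have hwv := wXY_weight_split d e n m v
              rw [hw] at hwv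
              have hxv : Finsupp.weight (wPP d n) (xPart v) = u.1 :=
                (congrArg Prod.fst hwv).symm
              rw [hxv]
              rw [finrank_coxPieceX] at hA
              omega
            obtain ⟨b', hb'lt, hb'w⟩ := exists_smaller_y r d e n m lX lY hr hcnt hFX'
            have hfin : {w' : PPVars d n ⊕ PPVars e m →₀ ℕ |
                Finsupp.weight (wXY d e n m) w' = Finsupp.weight (wXY d e n m) (eR (yPart v'))
                ∧ prodLt lX lY w' (eR (yPart v'))}.Finite :=
              (fiberXY_finite d e n m _).subset fun z hz => hz.1
            have hyadd : yPart v' =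
                yPart v + yPart (Finsupp.single s 1 : PPVars d n ⊕ PPVars e m →₀ ℕ) := by
              rw [hv', yPart_add]
            refine (Set.ncard_pos hfin).mpr ?_
            refine ⟨eR (b' + yPart (Finsupp.single s 1 : PPVars d n ⊕ PPVars e m →₀ ℕ)), ?_, ?_⟩
            · rw [wXY_weight_split, wXY_weight_split, xPart_eR, xPart_eR, yPart_eR, yPart_eR]
              congr 1
              rw [map_add, hyadd, map_add, hb'w]
            · refine Or.inl ?_
              rw [yPart_eR, yPart_eR, hyadd]
              exact hlY _ _ _ hb'lt
        · rw [mem_coxPieceXY]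
          exact isWeightedHomogeneous_monomial _ _ _
            (by rw [wXY_weight_split, xPart_eL, yPart_eL, map_zero, hxw])
      · -- target ℬ
        rw [Jpiece_B r d e n m lX lY IX _ hA' hB']
        exact mulLL d e n m lX lY hlX hlY s u r x hx
    · -- case 𝒞
      rw [Jpiece_C r d e n m lX lY IX u hA hB] at hx
      rw [Submodule.mem_bot] at hx
      rw [hx, mul_zero]
      exact zero_mem _

end Lemma31

/-- Lemma 3.1 for products of projective spaces: the graded subspace `J` associated to a
homogeneous ideal `I_X ⊆ S_X` with Hilbert function `h_{r,X}` is an ideal of `S_{X×Y}`. -/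
theorem graded_subspace_is_ideal (r d e : ℕ) (hr : 1 ≤ r) (hd : 1 ≤ d) (he : 1 ≤ e)
    (n : Fin d → ℕ) (m : Fin e → ℕ) (hn : ∀ i, 1 ≤ n i) (hm : ∀ j, 1 ≤ m j)
    (lX : LinearOrder (PPVars d n →₀ ℕ))
    (hlX : ∀ u v w : PPVars d n →₀ ℕ, lX.lt u v → lX.lt (u + w) (v + w))
    (lY : LinearOrder (PPVars e m →₀ ℕ))
    (hlY : ∀ u v w : PPVars e m →₀ ℕ, lY.lt u v → lY.lt (u + w) (v + w))
    (IX : Ideal (MvPolynomial (PPVars d n) ℂ))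
    (hIXhom : IsHomogX d n IX)
    (hIXHF : ∀ D : Fin d → ℕ, HFX d n IX D = min (Module.finrank ℂ ↥(coxPieceX d n D)) r) :
    ∃ JI : Ideal (CoxXY d e n m),
      Submodule.restrictScalars ℂ JI =
        ⨆ u : (Fin d → ℕ) × (Fin e → ℕ), Jpiece r d e n m lX lY IX u := by
  classical
  set MM := ⨆ u : (Fin d → ℕ) × (Fin e → ℕ), Jpiece r d e n m lX lY IX u with hMM
  have varKey : ∀ (s : PPVars d n ⊕ PPVars e m) (x : CoxXY d e n m),
      x ∈ MM → (X s : CoxXY d e n m) * x ∈ MM := by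
    intro s x hx
    refine Submodule.iSup_induction (motive := fun y => (X s : CoxXY d e n m) * y ∈ MM)
      (fun u : (Fin d → ℕ) × (Fin e → ℕ) => Jpiece r d e n m lX lY IX u) hx ?_ ?_ ?_
    · intro u y hy
      exact Submodule.mem_iSup_of_mem (u + wXY d e n m s)
        (Lemma31.pieceMul r d e n m lX lY hr hlX hlY IX s u hy)
    · show (X s : CoxXY d e n m) * 0 ∈ MM
      rw [mul_zero]; exact zero_mem MM
    · intro y z hy hz
      show (X s : CoxXY d e n m) * (y + z) ∈ MM
      rw [mul_add]; exact add_mem hy hz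
  have key : ∀ f x : CoxXY d e n m, x ∈ MM → f * x ∈ MM := by
    intro f
    induction f using MvPolynomial.induction_on with
    | C a => intro x hx; rw [← smul_eq_C_mul]; exact Submodule.smul_mem MM a hx
    | add p q hp hq => intro x hx; rw [add_mul]; exact add_mem (hp x hx) (hq x hx)
    | mul_X p s hp => intro x hx; rw [mul_assoc]; exact hp _ (varKey s x hx)
  refine ⟨{ toAddSubmonoid := MM.toAddSubmonoid,
            smul_mem' := fun c {x} hx => by
              simpa [smul_eq_mul] using key c x hx }, ?_⟩
  rfl
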